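/- Let A₁, A₂ ⊆ ℝ^m be convex sets with A₁ ∩ A₂ ≠ ∅, and set E = (A₁ × A₁) ∪ (A₂ × A₂). Then the separately convex hull of E is E^sc = E ∪ [(A₁ ∩ A₂) × conv(A₁ ∪ A₂)] ∪ [conv(A₁ ∪ A₂) × (A₁ ∩ A₂)]. Consequently, the diagonalized-symmetrized hull satisfies Ê^sc := widehat(E^sc) = E. -/
import Mathlib


open Set

/-- Separate convexity (with vectorial components) of a subset of a product space. -/
def SepConvex {α : Type*} [AddCommGroup α] [Module ℝ α] (E : Set (α × α)) : Prop :=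
  ∀ p ∈ E, ∀ q ∈ E, ∀ t : ℝ, t ∈ Set.Icc (0:ℝ) 1 → (p.1 = q.1 ∨ p.2 = q.2) →
    t • p + (1 - t) • q ∈ E

/-- The separately convex hull: smallest separately convex superset. -/
def sepConvexHull {α : Type*} [AddCommGroup α] [Module ℝ α] (E : Set (α × α)) : Set (α × α) :=
  ⋂₀ {F : Set (α × α) | E ⊆ F ∧ SepConvex F}

/-- Diagonalized and symmetrized version Ê of a set E. -/
def hatSet {α : Type*} (E : Set (α × α)) : Set (α × α) :=
  {p ∈ E | (p.1, p.1) ∈ E ∧ (p.2, p.1) ∈ E ∧ (p.2, p.2) ∈ E}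

/-- `P` is a maximal Cartesian subset of `E`. -/
def IsMaxCart {α : Type*} (E P : Set (α × α)) : Prop :=
  ∃ A : Set α, P = A ×ˢ A ∧ P ⊆ E ∧ ∀ B : Set α, A ⊆ B → B ×ˢ B ⊆ E → B = A

theorem sepConvexHull_two_wells {m : ℕ} (A₁ A₂ : Set (Fin m → ℝ))
    (h₁ : Convex ℝ A₁) (h₂ : Convex ℝ A₂) (hne : (A₁ ∩ A₂).Nonempty) :
    sepConvexHull ((A₁ ×ˢ A₁) ∪ (A₂ ×ˢ A₂)) =
      (A₁ ×ˢ A₁) ∪ (A₂ ×ˢ A₂) ∪ ((A₁ ∩ A₂) ×ˢ (convexHull ℝ (A₁ ∪ A₂))) ∪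
        ((convexHull ℝ (A₁ ∪ A₂)) ×ˢ (A₁ ∩ A₂)) ∧
    hatSet (sepConvexHull ((A₁ ×ˢ A₁) ∪ (A₂ ×ˢ A₂))) = (A₁ ×ˢ A₁) ∪ (A₂ ×ˢ A₂) := by
  obtain ⟨z, hz1, hz2⟩ := hne
  set C := convexHull ℝ (A₁ ∪ A₂) with hC
  have hCconv : Convex ℝ C := convex_convexHull ℝ _
  have h1C : A₁ ⊆ C := (subset_union_left).trans (subset_convexHull ℝ _)
  have h2C : A₂ ⊆ C := (subset_union_right).trans (subset_convexHull ℝ _)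
  have hIconv : Convex ℝ (A₁ ∩ A₂) := h₁.inter h₂
  set E := (A₁ ×ˢ A₁) ∪ (A₂ ×ˢ A₂) with hE
  set F := E ∪ ((A₁ ∩ A₂) ×ˢ C) ∪ (C ×ˢ (A₁ ∩ A₂)) with hF
  have hsymm : ∀ x y : Fin m → ℝ, (x, y) ∈ F → (y, x) ∈ F := by
    rintro x y (((⟨u1, u2⟩ | ⟨u1, u2⟩) | ⟨u1, u2⟩) | ⟨u1, u2⟩)
    · exact Or.inl (Or.inl (Or.inl ⟨u2, u1⟩))
    · exact Or.inl (Or.inl (Or.inr ⟨u2, u1⟩))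
    · exact Or.inr ⟨u2, u1⟩
    · exact Or.inl (Or.inr ⟨u2, u1⟩)
  -- each horizontal slice of F is convex
  have K1 : ∀ (a y₁ y₂ : Fin m → ℝ), (a, y₁) ∈ F → (a, y₂) ∈ F → ∀ t : ℝ, 0 ≤ t → t ≤ 1 →
      (a, t • y₁ + (1 - t) • y₂) ∈ F := by
    intro a y₁ y₂ hy₁ hy₂ t ht0 ht1
    have hsub : ∀ y : Fin m → ℝ, (a, y) ∈ F → y ∈ C := by
      rintro y (((⟨u1, u2⟩ | ⟨u1, u2⟩) | ⟨u1, u2⟩) | ⟨u1, u2⟩)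
      · exact h1C u2
      · exact h2C u2
      · exact u2
      · exact h1C u2.1
    have ht1' : (0:ℝ) ≤ 1 - t := by linarith
    have hsum : t + (1 - t) = 1 := by ring
    by_cases ha : a ∈ A₁ ∩ A₂
    · exact Or.inl (Or.inr ⟨ha, hCconv (hsub _ hy₁) (hsub _ hy₂) ht0 ht1' hsum⟩)
    · by_cases ha1 : a ∈ A₁
      · have ha2 : a ∉ A₂ := fun h => ha ⟨ha1, h⟩
        have key : ∀ y : Fin m → ℝ, (a, y) ∈ F → y ∈ A₁ := by
          rintro y (((⟨u1, u2⟩ | ⟨u1, u2⟩) | ⟨u1, u2⟩) | ⟨u1, u2⟩)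
          · exact u2
          · exact absurd u1 ha2
          · exact absurd u1.2 ha2
          · exact u2.1
        exact Or.inl (Or.inl (Or.inl ⟨ha1, h₁ (key _ hy₁) (key _ hy₂) ht0 ht1' hsum⟩))
      · by_cases ha2 : a ∈ A₂
        · have key : ∀ y : Fin m → ℝ, (a, y) ∈ F → y ∈ A₂ := by
            rintro y (((⟨u1, u2⟩ | ⟨u1, u2⟩) | ⟨u1, u2⟩) | ⟨u1, u2⟩)
            · exact absurd u1 ha1
            · exact u2
            · exact absurd u1.1 ha1
            · exact u2.2
          exact Or.inl (Or.inl (Or.inr ⟨ha2, h₂ (key _ hy₁) (key _ hy₂) ht0 ht1' hsum⟩))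
        · have key : ∀ y : Fin m → ℝ, (a, y) ∈ F → a ∈ C ∧ y ∈ A₁ ∩ A₂ := by
            rintro y (((⟨u1, u2⟩ | ⟨u1, u2⟩) | ⟨u1, u2⟩) | ⟨u1, u2⟩)
            · exact absurd u1 ha1
            · exact absurd u1 ha2
            · exact absurd u1.1 ha1
            · exact ⟨u1, u2⟩
          obtain ⟨haC, hy1'⟩ := key _ hy₁
          obtain ⟨_, hy2'⟩ := key _ hy₂
          exact Or.inr ⟨haC, hIconv hy1' hy2' ht0 ht1' hsum⟩
  have hFsc : SepConvex F := by
    rintro p hp q hq t ⟨ht0, ht1⟩ (h | h)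
    · have heq : t • p + (1 - t) • q = (p.1, t • p.2 + (1 - t) • q.2) := by
        have e1 : t • p.1 + (1 - t) • q.1 = p.1 := by rw [h]; module
        rw [Prod.ext_iff]
        exact ⟨e1, rfl⟩
      rw [heq]
      have hq' : (p.1, q.2) ∈ F := by rw [h]; exact hq
      exact K1 p.1 p.2 q.2 hp hq' t ht0 ht1
    · have heq : t • p + (1 - t) • q = (t • p.1 + (1 - t) • q.1, p.2) := by
        have e2 : t • p.2 + (1 - t) • q.2 = p.2 := by rw [h]; module
        rw [Prod.ext_iff]
        exact ⟨rfl, e2⟩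
      rw [heq]
      have hp' : (p.2, p.1) ∈ F := hsymm _ _ hp
      have hq' : (p.2, q.1) ∈ F := by
        have := hsymm _ _ hq
        rwa [← h] at this
      exact hsymm _ _ (K1 p.2 p.1 q.1 hp' hq' t ht0 ht1)
  have hEF : E ⊆ F := fun p hp => Or.inl (Or.inl hp)
  have hh1 : sepConvexHull E ⊆ F := sInter_subset_of_mem ⟨hEF, hFsc⟩
  have hh2 : F ⊆ sepConvexHull E := by
    rintro ⟨x, y⟩ hp
    rw [sepConvexHull, mem_sInter]
    rintro G ⟨hEG, hGsc⟩
    rcases hp with ((hp | hp) | ⟨hx, hy⟩) | ⟨hx, hy⟩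
    · exact hEG (Or.inl hp)
    · exact hEG (Or.inr hp)
    · rw [hC, convexHull_union ⟨z, hz1⟩ ⟨z, hz2⟩, h₁.convexHull_eq, h₂.convexHull_eq,
        mem_convexJoin] at hy
      obtain ⟨u, hu, v, hv, s, r, hs, hr, hsr, hyeq⟩ := hy
      have hr' : r = 1 - s := by linarith
      subst hr'
      have g1 : (x, u) ∈ G := hEG (Or.inl ⟨hx.1, hu⟩)
      have g2 : (x, v) ∈ G := hEG (Or.inr ⟨hx.2, hv⟩)
      have := hGsc _ g1 _ g2 s ⟨hs, by linarith⟩ (Or.inl rfl)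
      have heq : s • ((x, u) : (Fin m → ℝ) × (Fin m → ℝ)) + (1 - s) • (x, v) = (x, y) := by
        rw [Prod.ext_iff]
        constructor
        · show s • x + (1 - s) • x = x
          module
        · exact hyeq
      rwa [heq] at this
    · rw [hC, convexHull_union ⟨z, hz1⟩ ⟨z, hz2⟩, h₁.convexHull_eq, h₂.convexHull_eq,
        mem_convexJoin] at hx
      obtain ⟨u, hu, v, hv, s, r, hs, hr, hsr, hxeq⟩ := hx
      have hr' : r = 1 - s := by linarith
      subst hr'
      have g1 : (u, y) ∈ G := hEG (Or.inl ⟨hu, hy.1⟩)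
      have g2 : (v, y) ∈ G := hEG (Or.inr ⟨hv, hy.2⟩)
      have := hGsc _ g1 _ g2 s ⟨hs, by linarith⟩ (Or.inr rfl)
      have heq : s • ((u, y) : (Fin m → ℝ) × (Fin m → ℝ)) + (1 - s) • (v, y) = (x, y) := by
        rw [Prod.ext_iff]
        constructor
        · exact hxeq
        · show s • y + (1 - s) • y = y
          module
      rwa [heq] at this
  have hEq : sepConvexHull E = F := Subset.antisymm hh1 hh2
  have hhat : hatSet F = E := by
    ext ⟨x, y⟩
    constructor
    · rintro ⟨hp, hxx, hyx, hyy⟩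
      rcases hp with ((hp | hp) | ⟨hx', hy'⟩) | ⟨hx', hy'⟩
      · exact Or.inl hp
      · exact Or.inr hp
      · have hy2 : y ∈ A₁ ∨ y ∈ A₂ := by
          rcases hyy with ((h | h) | h) | h
          · exact Or.inl h.1
          · exact Or.inr h.1
          · exact Or.inl h.1.1
          · exact Or.inl h.2.1
        rcases hy2 with h | h
        · exact Or.inl ⟨hx'.1, h⟩
        · exact Or.inr ⟨hx'.2, h⟩
      · have hx2 : x ∈ A₁ ∨ x ∈ A₂ := by
          rcases hxx with ((h | h) | h) | h
          · exact Or.inl h.1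
          · exact Or.inr h.1
          · exact Or.inl h.1.1
          · exact Or.inl h.2.1
        rcases hx2 with h | h
        · exact Or.inl ⟨h, hy'.1⟩
        · exact Or.inr ⟨h, hy'.2⟩
    · rintro (⟨u1, u2⟩ | ⟨u1, u2⟩)
      · exact ⟨Or.inl (Or.inl (Or.inl ⟨u1, u2⟩)), Or.inl (Or.inl (Or.inl ⟨u1, u1⟩)),
          Or.inl (Or.inl (Or.inl ⟨u2, u1⟩)), Or.inl (Or.inl (Or.inl ⟨u2, u2⟩))⟩
      · exact ⟨Or.inl (Or.inl (Or.inr ⟨u1, u2⟩)), Or.inl (Or.inl (Or.inr ⟨u1, u1⟩)),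
          Or.inl (Or.inl (Or.inr ⟨u2, u1⟩)), Or.inl (Or.inl (Or.inr ⟨u2, u2⟩))⟩
  exact ⟨hEq, by rw [hEq]; exact hhat⟩
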